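/- arXiv:0909.1344 — 3 statements merged into one kernel-verified Lean document; each statement's English description precedes it below -/
import Mathlib

section
/- Parametrization of rank-one zero-forcing transmit covariances: Let H = [h_1, …, h_K] ∈ ℂ^{M×K} have rank K (so K ≤ M). Let g_k be the k-th column of H^+ = H (H^H H)^{-1}, normalized to unit norm, let U^⊥ ∈ ℂ^{M×(M−K)} be any matrix with orthonormal columns spanning the orthogonal complement of the column span of H, and let U_k = [g_k | U^⊥] ∈ ℂ^{M×(M−K+1)}. If T ∈ ℂ^{M×M} is Hermitian positive semidefinite of rank 1 and satisfies h_j^H T h_j = 0 for all j ≠ k, then there exists a vector a ∈ ℂ^{M−K+1} such that T = U_k a a^H U_k^H; moreover h_k^H T h_k = |g_k^H h_k|² · |a_1|², where a_1 is the first component of a. -/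
open Matrix BigOperators
open scoped ComplexOrder

/-- The `k`-th column of the Moore–Penrose pseudoinverse `H⁺ = H (Hᴴ H)⁻¹`,
normalized to unit (Euclidean) norm. -/
noncomputable def normalizedPinvCol (M K : ℕ) (H : Matrix (Fin M) (Fin K) ℂ)
    (k : Fin K) : Fin M → ℂ :=
  ((Real.sqrt ((star (fun i => (H * (Hᴴ * H)⁻¹) i k) ⬝ᵥ
      (fun i => (H * (Hᴴ * H)⁻¹) i k)).re) : ℂ))⁻¹ •
    (fun i => (H * (Hᴴ * H)⁻¹) i k)

/-- The matrix `U_k = [g_k | U^⊥]`, whose first column is the normalized `k`-th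
pseudoinverse column `g_k` and whose remaining columns are those of `U^⊥`. -/
noncomputable def zfBasisMatrix (M K : ℕ) (H : Matrix (Fin M) (Fin K) ℂ)
    (Uperp : Matrix (Fin M) (Fin (M - K)) ℂ) (k : Fin K) :
    Matrix (Fin M) (Fin (M - K + 1)) ℂ :=
  Matrix.of fun i j =>
    (Fin.cons (normalizedPinvCol M K H k)
      (fun j' : Fin (M - K) => fun i' => Uperp i' j') :
        Fin (M - K + 1) → (Fin M → ℂ)) j i


section Helpers

lemma rank_one_exists_vecMulVec {m : Type*} [Fintype m] [DecidableEq m]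
    {T : Matrix m m ℂ} (h : T.rank = 1) :
    ∃ w u : m → ℂ, T = vecMulVec w u := by
  have h1 : Module.finrank ℂ (LinearMap.range T.mulVecLin) = 1 := h
  obtain ⟨⟨w, hwmem⟩, hw0, hall⟩ := finrank_eq_one_iff'.mp h1
  have hcol : ∀ j, ∃ c : ℂ, c • w = T *ᵥ Pi.single j 1 := by
    intro j
    obtain ⟨c, hc⟩ := hall ⟨T *ᵥ Pi.single j 1, ⟨Pi.single j 1, Matrix.mulVecLin_apply _ _⟩⟩
    exact ⟨c, congrArg Subtype.val hc⟩
  choose u hu using hcol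
  refine ⟨w, u, ?_⟩
  ext i j
  have h2 := congrFun (hu j) i
  simp only [Pi.smul_apply, smul_eq_mul] at h2
  have h3 : (T *ᵥ Pi.single j 1) i = T i j := by
    simp [mulVec, dotProduct, Pi.single_apply]
  rw [vecMulVec_apply, ← h3, ← h2, mul_comm]


lemma quadform_single {m : Type*} [Fintype m] [DecidableEq m]
    (T : Matrix m m ℂ) (j : m) :
    star (Pi.single j 1 : m → ℂ) ⬝ᵥ (T *ᵥ Pi.single j 1) = T j j := by
  have hs : (star (Pi.single j 1 : m → ℂ)) = Pi.single j 1 := by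
    ext i; simp [Pi.single_apply, apply_ite]
  rw [hs]
  simp [dotProduct, mulVec, Pi.single_apply, Finset.sum_ite_eq', Finset.mul_sum, apply_ite]

lemma posSemidef_rank_one_decomp' {m : Type*} [Fintype m] [DecidableEq m]
    {w u : m → ℂ} (hT : (vecMulVec w u).PosSemidef) (h : (vecMulVec w u).rank = 1) :
    ∃ v : m → ℂ, vecMulVec w u = vecMulVec v (star v) := by
  have hne : vecMulVec w u ≠ 0 := by
    intro h0; rw [h0] at h; simp [Matrix.rank_zero] at h
  obtain ⟨i0, j0, hij⟩ : ∃ i j, vecMulVec w u i j ≠ 0 := by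
    by_contra hc; push_neg at hc
    exact hne (by ext i j; simpa using hc i j)
  rw [vecMulVec_apply] at hij
  have hu0 : u j0 ≠ 0 := fun h0 => hij (by simp [h0])
  have h1 : ∀ i, w i * u j0 = (starRingEnd ℂ) (w j0) * (starRingEnd ℂ) (u i) := by
    intro i
    have h2 := congrFun (congrFun hT.1 i) j0
    simp only [conjTranspose_apply, vecMulVec_apply, star_mul', Complex.star_def] at h2
    rw [← h2]
  have key : ∀ i j, w i * u j * ((starRingEnd ℂ) (u j0) * u j0)
      = (w j0 * u j0) * ((starRingEnd ℂ) (u i) * u j) := by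
    intro i j
    linear_combination (u j * (starRingEnd ℂ) (u j0)) * h1 i
      - ((starRingEnd ℂ) (u i) * u j) * h1 j0
  have hpos := hT.dotProduct_mulVec_nonneg (Pi.single j0 1)
  rw [quadform_single] at hpos
  rw [vecMulVec_apply] at hpos
  set d : ℝ := (w j0 * u j0).re with hd
  have hdnn : 0 ≤ d := (Complex.nonneg_iff.mp hpos).1
  have him : (w j0 * u j0).im = 0 := ((Complex.nonneg_iff.mp hpos).2).symm
  have hdiag : w j0 * u j0 = (d : ℂ) := Complex.ext rfl (by simp [him])
  have hns : (Complex.normSq (u j0) : ℂ) ≠ 0 := by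
    simpa using hu0
  set r : ℝ := d / Complex.normSq (u j0) with hr
  have hrnn : 0 ≤ r := div_nonneg hdnn (Complex.normSq_nonneg _)
  refine ⟨fun i => ((Real.sqrt r : ℝ) : ℂ) * (starRingEnd ℂ) (u i), ?_⟩
  ext i j
  simp only [vecMulVec_apply, Pi.star_apply, star_mul', Complex.star_def,
    Complex.conj_conj, Complex.conj_ofReal]
  have hsq : ((Real.sqrt r : ℝ) : ℂ) * ((Real.sqrt r : ℝ) : ℂ) = (r : ℂ) := by
    rw [← Complex.ofReal_mul, Real.mul_self_sqrt hrnn]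
  have hkey := key i j
  rw [hdiag] at hkey
  have hcm : (starRingEnd ℂ) (u j0) * u j0 = (Complex.normSq (u j0) : ℂ) := by
    rw [mul_comm, Complex.mul_conj]
  rw [hcm] at hkey
  have : w i * u j = (r : ℂ) * ((starRingEnd ℂ) (u i) * u j) := by
    rw [hr, Complex.ofReal_div]
    field_simp
    linear_combination hkey
  rw [this, ← hsq]; ring


lemma dot_vecMulVec_dot {m : Type*} [Fintype m] (v x y : m → ℂ) :
    star x ⬝ᵥ (vecMulVec v (star v) *ᵥ y) = (star x ⬝ᵥ v) * (star v ⬝ᵥ y) := by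
  simp only [dotProduct, mulVec, vecMulVec_apply, Pi.star_apply, Finset.mul_sum,
    Finset.sum_mul]
  rw [Finset.sum_comm]
  refine Finset.sum_congr rfl fun i _ => Finset.sum_congr rfl fun j _ => by ring

lemma star_dot_comm {m : Type*} [Fintype m] (x v : m → ℂ) :
    star v ⬝ᵥ x = (starRingEnd ℂ) (star x ⬝ᵥ v) := by
  simp only [dotProduct, Pi.star_apply, map_sum, _root_.map_mul, Complex.star_def,
    Complex.conj_conj]
  exact Finset.sum_congr rfl fun i _ => by ring

lemma vecMulVec_mulVec_conj {m n : Type*} [Fintype m] [Fintype n]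
    (A : Matrix m n ℂ) (a : n → ℂ) :
    vecMulVec (A *ᵥ a) (star (A *ᵥ a)) = A * vecMulVec a (star a) * Aᴴ := by
  ext i j
  simp only [vecMulVec_apply, mul_apply, mulVec, dotProduct, Pi.star_apply,
    conjTranspose_apply, Complex.star_def, map_sum, _root_.map_mul]
  rw [Finset.sum_mul_sum]
  simp only [Finset.sum_mul, Finset.mul_sum]
  rw [Finset.sum_comm]
  refine Finset.sum_congr rfl fun q _ => Finset.sum_congr rfl fun p _ => by ring

lemma gram_isUnit {M K : ℕ} {H : Matrix (Fin M) (Fin K) ℂ} (hrank : H.rank = K) :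
    IsUnit (Hᴴ * H) := by
  have h1 : (Hᴴ * H).rank = K := by rw [H.rank_conjTranspose_mul_self, hrank]
  rw [← Matrix.mulVec_injective_iff_isUnit]
  have htop : LinearMap.range (Hᴴ * H).mulVecLin = ⊤ := by
    apply Submodule.eq_top_of_finrank_eq
    rw [Module.finrank_pi]  -- finrank (Fin K → ℂ) = K
    simpa [Matrix.rank] using h1
  have hsurj : Function.Surjective (Hᴴ * H).mulVecLin :=
    LinearMap.range_eq_top.mp htop
  have hinj := LinearMap.injective_iff_surjective.mpr hsurj
  exact hinj

end Helpers

/-- **Parametrization of rank-one zero-forcing transmit covariances.** If `T`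
is Hermitian positive semidefinite of rank one and `h_jᴴ T h_j = 0` for all
`j ≠ k`, then `T = U_k a aᴴ U_kᴴ` for some vector `a`, and moreover
`h_kᴴ T h_k = |g_kᴴ h_k|² · |a_1|²`. -/
theorem rank_one_zero_forcing_covariance_parametrization
    (M K : ℕ) (hKM : K ≤ M)
    (H : Matrix (Fin M) (Fin K) ℂ) (hrank : H.rank = K)
    (Uperp : Matrix (Fin M) (Fin (M - K)) ℂ)
    (hUorth : Uperpᴴ * Uperp = 1)
    (hUspan : (↑(Submodule.span ℂ
        (Set.range (fun j : Fin (M - K) => fun i => Uperp i j))) : Set (Fin M → ℂ)) =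
      {v | ∀ j : Fin K, star (fun i => H i j) ⬝ᵥ v = 0})
    (k : Fin K)
    (T : Matrix (Fin M) (Fin M) ℂ) (hT : T.PosSemidef) (hTrank : T.rank = 1)
    (hZF : ∀ j : Fin K, j ≠ k →
      star (fun i => H i j) ⬝ᵥ (T *ᵥ (fun i => H i j)) = 0) :
    ∃ a : Fin (M - K + 1) → ℂ,
      T = zfBasisMatrix M K H Uperp k * vecMulVec a (star a) *
          (zfBasisMatrix M K H Uperp k)ᴴ ∧
      star (fun i => H i k) ⬝ᵥ (T *ᵥ (fun i => H i k)) =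
        ((Complex.normSq (star (normalizedPinvCol M K H k) ⬝ᵥ (fun i => H i k)) *
            Complex.normSq (a 0) : ℝ) : ℂ) := by
  classical
  have hunit : IsUnit (Hᴴ * H) := gram_isUnit hrank
  have hdet : IsUnit (Hᴴ * H).det := (Matrix.isUnit_iff_isUnit_det _).mp hunit
  have hpinv : Hᴴ * (H * (Hᴴ * H)⁻¹) = 1 := by
    rw [← Matrix.mul_assoc, Matrix.mul_nonsing_inv _ hdet]
  set p : Fin M → ℂ := fun i => (H * (Hᴴ * H)⁻¹) i k with hp
  have hdot : ∀ j : Fin K, star (fun i => H i j) ⬝ᵥ p = if j = k then 1 else 0 := by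
    intro j
    have h2 := congrFun (congrFun hpinv j) k
    simp only [Matrix.mul_apply, Matrix.one_apply, conjTranspose_apply] at h2
    simpa [dotProduct, Complex.star_def, hp, Matrix.mul_apply] using h2
  have hpk : star (fun i => H i k) ⬝ᵥ p = 1 := by simpa using hdot k
  have hpne : p ≠ 0 := by
    intro h0; rw [h0] at hpk; simp [dotProduct] at hpk
  set s : ℝ := Real.sqrt ((star p ⬝ᵥ p).re) with hs
  have hsp : (star p ⬝ᵥ p).re = ∑ i, Complex.normSq (p i) := by
    simp only [dotProduct, Pi.star_apply, Complex.star_def]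
    rw [Complex.re_sum]
    refine Finset.sum_congr rfl fun i _ => ?_
    rw [mul_comm, Complex.mul_conj]
    simp
  have hspos : 0 < (star p ⬝ᵥ p).re := by
    rw [hsp]
    obtain ⟨i0, hi0⟩ : ∃ i, p i ≠ 0 := by
      by_contra hc; push_neg at hc; exact hpne (funext hc)
    exact Finset.sum_pos' (fun i _ => Complex.normSq_nonneg _)
      ⟨i0, Finset.mem_univ _, Complex.normSq_pos.mpr hi0⟩
  have hs0 : (0:ℝ) < s := Real.sqrt_pos.mpr hspos
  have hsne : ((s:ℝ):ℂ) ≠ 0 := by exact_mod_cast hs0.ne'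
  have hg : normalizedPinvCol M K H k = (((s:ℝ):ℂ))⁻¹ • p := rfl
  -- decompose T
  obtain ⟨w, u, hwu⟩ := rank_one_exists_vecMulVec hTrank
  obtain ⟨v, hv⟩ := posSemidef_rank_one_decomp' (hwu ▸ hT) (hwu ▸ hTrank)
  have hTv : T = vecMulVec v (star v) := hwu.trans hv
  have hvj : ∀ j : Fin K, j ≠ k → star (fun i => H i j) ⬝ᵥ v = 0 := by
    intro j hj
    have hz := hZF j hj
    rw [hTv, dot_vecMulVec_dot, star_dot_comm (fun i => H i j) v, Complex.mul_conj] at hz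
    exact Complex.normSq_eq_zero.mp (by exact_mod_cast hz)
  set c : ℂ := star (fun i => H i k) ⬝ᵥ v with hc
  have hu' : ∀ j : Fin K, star (fun i => H i j) ⬝ᵥ (v - c • p) = 0 := by
    intro j
    rw [dotProduct_sub, dotProduct_smul, hdot j]
    by_cases hj : j = k
    · subst hj; rw [← hc]; simp
    · rw [hvj j hj, if_neg hj]; simp
  have hmem : (v - c • p) ∈ Submodule.span ℂ
      (Set.range (fun j : Fin (M - K) => fun i => Uperp i j)) := by
    have : (v - c • p) ∈ (↑(Submodule.span ℂ
        (Set.range (fun j : Fin (M - K) => fun i => Uperp i j))) : Set (Fin M → ℂ)) := by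
      rw [hUspan]; exact hu'
    exact this
  obtain ⟨b, hb⟩ := Submodule.mem_span_range_iff_exists_fun ℂ |>.mp hmem
  refine ⟨Fin.cons (c * s) b, ?_, ?_⟩
  · -- main equality
    have hva : v = (zfBasisMatrix M K H Uperp k) *ᵥ (Fin.cons (c * s) b) := by
      ext i
      simp only [mulVec, dotProduct]
      rw [Fin.sum_univ_succ]
      have hb_i := congrFun hb i
      simp only [Finset.sum_apply, Pi.smul_apply, smul_eq_mul, Pi.sub_apply,
        Pi.smul_apply] at hb_i
      simp only [zfBasisMatrix, Matrix.of_apply, Fin.cons_zero, Fin.cons_succ]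
      have hgapp : normalizedPinvCol M K H k i = (((s:ℝ):ℂ))⁻¹ * p i := rfl
      rw [hgapp]
      have hsum : ∑ j : Fin (M - K), Uperp i j * b j = v i - c * p i := by
        rw [← hb_i]
        exact Finset.sum_congr rfl fun j _ => mul_comm _ _
      rw [hsum]
      field_simp
      ring
    rw [hTv, hva]
    exact vecMulVec_mulVec_conj _ _
  · -- scalar equality
    have hlhs : star (fun i => H i k) ⬝ᵥ (T *ᵥ (fun i => H i k)) =
        (Complex.normSq c : ℂ) := by
      rw [hTv, dot_vecMulVec_dot, star_dot_comm (fun i => H i k) v, ← hc, Complex.mul_conj]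
    rw [hlhs]
    have hgk : star (normalizedPinvCol M K H k) ⬝ᵥ (fun i => H i k) =
        (starRingEnd ℂ) (((s:ℝ):ℂ)⁻¹) := by
      rw [star_dot_comm, hg]
      congr 1
      rw [dotProduct_smul, hpk]
      simp
    rw [hgk, Fin.cons_zero]
    rw [Complex.normSq_conj, Complex.normSq_mul]
    have h1 : Complex.normSq (((s:ℝ):ℂ)⁻¹) = (s * s)⁻¹ := by
      rw [Complex.normSq_inv, Complex.normSq_ofReal]
    have h2 : Complex.normSq ((s:ℝ):ℂ) = s * s := Complex.normSq_ofReal s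
    rw [h1, h2]
    have : (s * s)⁻¹ * (Complex.normSq c * (s * s)) = Complex.normSq c := by
      field_simp
    rw [this]
end

section
/- Rank-one extraction from the semidefinite relaxation preserves the optimal value: Let u ∈ ℂ^n, let Ψ_1, …, Ψ_L ∈ ℂ^{n×n} be Hermitian positive semidefinite with at least one Ψ_ℓ positive definite, and let η_1, …, η_L > 0. Suppose A* maximizes u^H A u over all Hermitian positive semidefinite A ∈ ℂ^{n×n} with tr(Ψ_ℓ A) ≤ η_ℓ for all ℓ, and suppose a* maximizes Re(u^H a) over all a ∈ ℂ^n with a^H Ψ_ℓ a ≤ η_ℓ for all ℓ. Then |u^H a*|² = u^H A* u. -/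
open Matrix BigOperators
open scoped ComplexOrder

/-- Cauchy–Schwarz for a single row, in `Complex.normSq` form. -/
lemma cs_row_normSq {n : ℕ} (C x : Fin n → ℂ) :
    Complex.normSq (∑ j, C j * x j) ≤
      (∑ j, Complex.normSq (C j)) * ∑ j, Complex.normSq (x j) := by
  have h1 : ‖∑ j, C j * x j‖ ≤ ∑ j, ‖C j‖ * ‖x j‖ := by
    refine le_trans (norm_sum_le _ _) (le_of_eq ?_)
    simp [norm_mul]
  have h2 := Finset.sum_mul_sq_le_sq_mul_sq Finset.univ
    (fun j => ‖C j‖) (fun j => ‖x j‖)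
  have h3 : ‖∑ j, C j * x j‖ ^ 2 ≤ (∑ j, ‖C j‖ ^ 2) * ∑ j, ‖x j‖ ^ 2 :=
    le_trans (pow_le_pow_left₀ (norm_nonneg _) h1 2) h2
  simpa [← Complex.normSq_eq_norm_sq] using h3

/-- `star y ⬝ᵥ y` as a sum of `normSq`s. -/
lemma re_star_dot_self {n : ℕ} (y : Fin n → ℂ) :
    (star y ⬝ᵥ y).re = ∑ i, Complex.normSq (y i) := by
  have : star y ⬝ᵥ y = ∑ i, (Complex.normSq (y i) : ℂ) := by
    simp only [dotProduct, Pi.star_apply, Complex.star_def]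
    refine Finset.sum_congr rfl fun i _ => ?_
    rw [mul_comm, Complex.mul_conj]
  rw [this]
  simp

section
open scoped MatrixOrder
lemma psd_sqrt_exists {n : ℕ} {M : Matrix (Fin n) (Fin n) ℂ} (hM : M.PosSemidef) :
    ∃ S : Matrix (Fin n) (Fin n) ℂ, Sᴴ = S ∧ S * S = M :=
  ⟨CFC.sqrt M, (Matrix.nonneg_iff_posSemidef.mp (CFC.sqrt_nonneg M)).1.eq,
    CFC.sqrt_mul_sqrt_self M (Matrix.nonneg_iff_posSemidef.mpr hM)⟩
end

/-- Quadratic form of a PSD matrix is bounded by trace times the squared norm. -/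
lemma quad_le_trace_mul {n : ℕ} {M : Matrix (Fin n) (Fin n) ℂ}
    (hM : M.PosSemidef) (x : Fin n → ℂ) :
    (star x ⬝ᵥ M *ᵥ x).re ≤ M.trace.re * ∑ j, Complex.normSq (x j) := by
  obtain ⟨C, hCH, hCC⟩ := psd_sqrt_exists hM
  have hM' : M = Cᴴ * C := by rw [hCH, hCC]
  have hquad : star x ⬝ᵥ M *ᵥ x = star (C *ᵥ x) ⬝ᵥ (C *ᵥ x) := by
    rw [hM', ← mulVec_mulVec, dotProduct_mulVec, star_mulVec]
  have hq2 : (star x ⬝ᵥ M *ᵥ x).re = ∑ i, Complex.normSq ((C *ᵥ x) i) := by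
    rw [hquad, re_star_dot_self]
  have htr : M.trace.re = ∑ i, ∑ j, Complex.normSq (C i j) := by
    have : M.trace = ∑ j, ∑ i, (Complex.normSq (C i j) : ℂ) := by
      rw [hM']
      simp only [Matrix.trace, Matrix.diag, Matrix.mul_apply, conjTranspose_apply,
        Complex.star_def]
      refine Finset.sum_congr rfl fun j _ => Finset.sum_congr rfl fun i _ => ?_
      rw [mul_comm, Complex.mul_conj]
    rw [this, Finset.sum_comm]
    simp
  rw [hq2, htr, Finset.sum_mul]
  refine Finset.sum_le_sum fun i _ => ?_
  have : (C *ᵥ x) i = ∑ j, C i j * x j := rfl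
  rw [this]
  exact cs_row_normSq _ _

/-- **Rank-one extraction from the semidefinite relaxation preserves the
optimal value.** If `A*` maximizes `uᴴ A u` over Hermitian PSD matrices with
`tr(Ψ_ℓ A) ≤ η_ℓ`, and `a*` maximizes `Re(uᴴ a)` over vectors with
`aᴴ Ψ_ℓ a ≤ η_ℓ`, then `|uᴴ a*|² = uᴴ A* u`. -/
theorem rank_one_extraction_preserves_value
    (n L : ℕ) (u : Fin n → ℂ)
    (Ψ : Fin L → Matrix (Fin n) (Fin n) ℂ) (hΨ : ∀ ℓ, (Ψ ℓ).PosSemidef)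
    (hΨpd : ∃ ℓ, (Ψ ℓ).PosDef)
    (η : Fin L → ℝ) (hη : ∀ ℓ, 0 < η ℓ)
    (Astar : Matrix (Fin n) (Fin n) ℂ) (hA : Astar.PosSemidef)
    (hAfeas : ∀ ℓ, ((Ψ ℓ) * Astar).trace.re ≤ η ℓ)
    (hAmax : ∀ A : Matrix (Fin n) (Fin n) ℂ, A.PosSemidef →
      (∀ ℓ, ((Ψ ℓ) * A).trace.re ≤ η ℓ) →
      (star u ⬝ᵥ (A *ᵥ u)).re ≤ (star u ⬝ᵥ (Astar *ᵥ u)).re)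
    (astar : Fin n → ℂ)
    (hafeas : ∀ ℓ, (star astar ⬝ᵥ ((Ψ ℓ) *ᵥ astar)).re ≤ η ℓ)
    (hamax : ∀ a : Fin n → ℂ,
      (∀ ℓ, (star a ⬝ᵥ ((Ψ ℓ) *ᵥ a)).re ≤ η ℓ) →
      (star u ⬝ᵥ a).re ≤ (star u ⬝ᵥ astar).re) :
    Complex.normSq (star u ⬝ᵥ astar) = (star u ⬝ᵥ (Astar *ᵥ u)).re := by
  classical
  set v : ℝ := (star u ⬝ᵥ (Astar *ᵥ u)).re with hv
  have hq0 : (0 : ℂ) ≤ star u ⬝ᵥ (Astar *ᵥ u) := Matrix.PosSemidef.dotProduct_mulVec_nonneg hA u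
  have hqre : (star u ⬝ᵥ (Astar *ᵥ u)) = (v : ℂ) := by
    have him : (star u ⬝ᵥ (Astar *ᵥ u)).im = 0 := by
      have := (Complex.le_def.mp hq0).2
      simpa using this.symm
    exact Complex.ext (by simp [hv]) (by simp [him])
  have hv0 : 0 ≤ v := by
    have := (Complex.le_def.mp hq0).1
    simpa [hv] using this
  set t : ℂ := star u ⬝ᵥ astar with ht
  -- Step A : normSq t ≤ v, via the rank-one feasible matrix
  have stepA : Complex.normSq t ≤ v := by
    set Aout : Matrix (Fin n) (Fin n) ℂ := vecMulVec astar (star astar) with hAout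
    have hAoutPSD : Aout.PosSemidef := by
      refine Matrix.PosSemidef.of_dotProduct_mulVec_nonneg ?_ ?_
      · ext i j
        simp [hAout, vecMulVec_apply, conjTranspose_apply, mul_comm]
      · intro w
        have h1 : Aout *ᵥ w = (star astar ⬝ᵥ w) • astar := by
          ext i
          simp [hAout, mulVec, dotProduct, vecMulVec_apply, Finset.mul_sum,
            mul_comm, mul_left_comm]
        rw [h1]
        have h2 : star w ⬝ᵥ ((star astar ⬝ᵥ w) • astar)
            = (star astar ⬝ᵥ w) * (star w ⬝ᵥ astar) := by
          rw [dotProduct_smul, smul_eq_mul]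
        rw [h2]
        have h3 : star astar ⬝ᵥ w = star (star w ⬝ᵥ astar) := star_dotProduct astar w
        rw [h3, mul_comm]
        have h4 : (star w ⬝ᵥ astar) * star (star w ⬝ᵥ astar)
            = (Complex.normSq (star w ⬝ᵥ astar) : ℂ) := Complex.mul_conj _
        rw [h4]
        exact_mod_cast Complex.normSq_nonneg _
    have hAoutfeas : ∀ ℓ, ((Ψ ℓ) * Aout).trace.re ≤ η ℓ := by
      intro ℓ
      have : ((Ψ ℓ) * Aout).trace = star astar ⬝ᵥ ((Ψ ℓ) *ᵥ astar) := by
        simp only [Matrix.trace, Matrix.diag, Matrix.mul_apply, hAout,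
          vecMulVec_apply, dotProduct, mulVec, Pi.star_apply, Finset.mul_sum]
        refine Finset.sum_congr rfl fun j _ => Finset.sum_congr rfl fun i _ => by ring
      rw [this]
      exact hafeas ℓ
    have hval : (star u ⬝ᵥ (Aout *ᵥ u)).re = Complex.normSq t := by
      have h1 : Aout *ᵥ u = (star astar ⬝ᵥ u) • astar := by
        ext i
        simp [hAout, mulVec, dotProduct, vecMulVec_apply, Finset.mul_sum,
          mul_comm, mul_left_comm]
      rw [h1]
      have h2 : star u ⬝ᵥ ((star astar ⬝ᵥ u) • astar)
          = (star astar ⬝ᵥ u) * t := by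
        rw [dotProduct_smul, smul_eq_mul, ht]
      rw [h2]
      have h3 : star astar ⬝ᵥ u = star t := by rw [ht]; exact star_dotProduct astar u
      rw [h3, mul_comm]
      have h4 : t * star t = (Complex.normSq t : ℂ) := Complex.mul_conj _
      rw [h4]
      simp
    have := hAmax Aout hAoutPSD hAoutfeas
    rw [hval] at this
    exact this
  -- Step B : v ≤ normSq t
  have stepB : v ≤ Complex.normSq t := by
    rcases eq_or_lt_of_le hv0 with hv0' | hvpos
    · exact hv0' ▸ Complex.normSq_nonneg _
    · set c : ℝ := Real.sqrt v with hc
      have hcpos : 0 < c := Real.sqrt_pos.mpr hvpos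
      have hc2 : c * c = v := Real.mul_self_sqrt hv0
      obtain ⟨S, hSH, hSS⟩ := psd_sqrt_exists hA
      set x : Fin n → ℂ := S *ᵥ u with hx
      set y : Fin n → ℂ := Astar *ᵥ u with hy
      have hyx : y = S *ᵥ x := by rw [hy, hx, mulVec_mulVec, hSS]
      -- ∑ normSq x = v
      have hxnorm : ∑ j, Complex.normSq (x j) = v := by
        rw [← re_star_dot_self]
        have : star x ⬝ᵥ x = star u ⬝ᵥ (Astar *ᵥ u) := by
          rw [hx, star_mulVec, hSH, dotProduct_mulVec, vecMul_vecMul, hSS,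
            ← dotProduct_mulVec]
        rw [this, ← hv]
      -- the candidate vector
      set a : Fin n → ℂ := ((c⁻¹ : ℝ) : ℂ) • y with ha
      have hstar_a : star a = ((c⁻¹ : ℝ) : ℂ) • star y := by
        rw [ha, star_smul]
        congr 1
        simp
      have hfeas : ∀ ℓ, (star a ⬝ᵥ ((Ψ ℓ) *ᵥ a)).re ≤ η ℓ := by
        intro ℓ
        have hMψ : (Sᴴ * (Ψ ℓ) * S).PosSemidef := Matrix.PosSemidef.conjTranspose_mul_mul_same (hΨ ℓ) S
        have hyq : star y ⬝ᵥ ((Ψ ℓ) *ᵥ y) = star x ⬝ᵥ ((Sᴴ * (Ψ ℓ) * S) *ᵥ x) := by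
          simp [hyx, star_mulVec, dotProduct_mulVec, vecMul_vecMul,
            mulVec_mulVec, Matrix.mul_assoc]
        have htr : (Sᴴ * (Ψ ℓ) * S).trace = ((Ψ ℓ) * Astar).trace := by
          rw [hSH, trace_mul_cycle, hSS, trace_mul_comm]
        have hbound : (star y ⬝ᵥ ((Ψ ℓ) *ᵥ y)).re ≤ η ℓ * v := by
          rw [hyq]
          calc (star x ⬝ᵥ ((Sᴴ * (Ψ ℓ) * S) *ᵥ x)).re
              ≤ (Sᴴ * (Ψ ℓ) * S).trace.re * ∑ j, Complex.normSq (x j) :=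
                quad_le_trace_mul hMψ x
            _ = ((Ψ ℓ) * Astar).trace.re * v := by rw [htr, hxnorm]
            _ ≤ η ℓ * v := by
                have := hAfeas ℓ
                exact mul_le_mul_of_nonneg_right this hv0
        have hscale : star a ⬝ᵥ ((Ψ ℓ) *ᵥ a)
            = (((c⁻¹ * c⁻¹ : ℝ)) : ℂ) * (star y ⬝ᵥ ((Ψ ℓ) *ᵥ y)) := by
          rw [ha, hstar_a, mulVec_smul, smul_dotProduct, dotProduct_smul]
          simp only [smul_eq_mul]
          push_cast
          ring
        rw [hscale]
        have hre : ((((c⁻¹ * c⁻¹ : ℝ)) : ℂ) * (star y ⬝ᵥ ((Ψ ℓ) *ᵥ y))).re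
            = (c⁻¹ * c⁻¹) * (star y ⬝ᵥ ((Ψ ℓ) *ᵥ y)).re := by
          simp [Complex.mul_re]
        rw [hre]
        have hcne : c ≠ 0 := hcpos.ne'
        have hc2' : c⁻¹ * c⁻¹ * (η ℓ * v) = η ℓ := by
          rw [← hc2]
          field_simp
        calc c⁻¹ * c⁻¹ * (star y ⬝ᵥ ((Ψ ℓ) *ᵥ y)).re
            ≤ c⁻¹ * c⁻¹ * (η ℓ * v) := by
              apply mul_le_mul_of_nonneg_left hbound
              positivity
          _ = η ℓ := hc2'
      -- value of the candidate
      have hvala : (star u ⬝ᵥ a).re = c := by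
        have : star u ⬝ᵥ a = ((c⁻¹ : ℝ) : ℂ) * (star u ⬝ᵥ y) := by
          rw [ha, dotProduct_smul]
          simp [smul_eq_mul]
        rw [this, hy, hqre]
        have : ((c⁻¹ : ℝ) : ℂ) * (v : ℂ) = ((c⁻¹ * v : ℝ) : ℂ) := by push_cast; ring
        rw [this, Complex.ofReal_re]
        rw [← hc2]
        field_simp
      have hkey : c ≤ t.re := by
        rw [← hvala, ht]
        exact hamax a hfeas
      have : c * c ≤ t.re * t.re :=
        mul_le_mul hkey hkey hcpos.le (le_trans hcpos.le hkey)
      rw [hc2] at this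
      calc v ≤ t.re * t.re := this
        _ ≤ Complex.normSq t := by
            rw [Complex.normSq_apply]
            nlinarith [sq_nonneg t.im]
  exact le_antisymm stepA stepB
end

section
/- Theorem 2 (feasible points of the convex relaxation map to zero-forcing beamformers without losing weighted sum rate): Let H = [h_1, …, h_K] ∈ ℂ^{M×K} have rank K (so K ≤ M), and for each k let U_k ∈ ℂ^{M×(M−K+1)} have orthonormal columns spanning the orthogonal complement of span{ h_j : j ≠ k }. Let Φ_1, …, Φ_L ∈ ℂ^{M×M} be Hermitian positive semidefinite with Φ_1 = I (sum-power constraint), let γ_ℓ > 0, and let W_1, …, W_K ≥ 0. Suppose Ã_1, …, Ã_K ∈ ℂ^{(M−K+1)×(M−K+1)} are Hermitian positive semidefinite and satisfy Σ_{k=1}^K tr( Ã_k U_k^H Φ_ℓ U_k ) ≤ γ_ℓ for every ℓ. Then there exist vectors t̃_1, …, t̃_K ∈ ℂ^M with: (i) h_j^H t̃_k = 0 for all j ≠ k; (ii) Σ_{k=1}^K t̃_k^H Φ_ℓ t̃_k ≤ γ_ℓ for every ℓ; and (iii) Σ_{k=1}^K W_k log(1 + |h_k^H t̃_k|²) ≥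 Σ_{k=1}^K W_k log(1 + h_k^H U_k Ã_k U_k^H h_k). In other words, any feasible (not necessarily rank-one) point of the convex relaxation of the zero-forcing weighted sum rate maximization problem can be mapped to a set of feasible zero-forcing steering vectors without decreasing the weighted sum rate objective. -/
open Matrix BigOperators Finset
open scoped ComplexOrder

lemma dot_self_re {n : Type*} [Fintype n] (v : n → ℂ) :
    (star v ⬝ᵥ v).re = ∑ i, Complex.normSq (v i) := by
  simp only [dotProduct, Pi.star_apply, Complex.re_sum]
  exact Finset.sum_congr rfl fun i _ => by
    simp [Complex.mul_re, Complex.normSq_apply]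

lemma trace_herm_sq_re {n m : Type*} [Fintype n] [Fintype m] (Mx : Matrix m n ℂ) :
    (Mxᴴ * Mx).trace.re = ∑ j, ∑ i, Complex.normSq (Mx i j) := by
  simp only [Matrix.trace, Matrix.diag, Matrix.mul_apply, conjTranspose_apply,
    Complex.re_sum]
  exact Finset.sum_congr rfl fun j _ => Finset.sum_congr rfl fun i _ => by
    simp [Complex.mul_re, Complex.normSq_apply]

lemma mulVec_norm_le {n m : Type*} [Fintype n] [Fintype m] (Mx : Matrix m n ℂ) (u : n → ℂ) :
    ∑ i, Complex.normSq ((Mx *ᵥ u) i) ≤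
      (∑ j, ∑ i, Complex.normSq (Mx i j)) * ∑ j, Complex.normSq (u j) := by
  rw [Finset.sum_comm, Finset.sum_mul]
  refine Finset.sum_le_sum fun i _ => ?_
  have h1 : ‖(Mx *ᵥ u) i‖ ≤ ∑ j, ‖Mx i j‖ * ‖u j‖ := by
    refine le_trans (norm_sum_le _ _) (le_of_eq ?_)
    exact Finset.sum_congr rfl fun j _ => norm_mul _ _
  have h2 : (∑ j, ‖Mx i j‖ * ‖u j‖) ^ 2 ≤
      (∑ j, ‖Mx i j‖ ^ 2) * ∑ j, ‖u j‖ ^ 2 :=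
    Finset.sum_mul_sq_le_sq_mul_sq _ _ _
  have h3 : Complex.normSq ((Mx *ᵥ u) i) ≤
      (∑ j, ‖Mx i j‖ ^ 2) * ∑ j, ‖u j‖ ^ 2 := by
    rw [← Complex.sq_norm]
    exact le_trans (pow_le_pow_left₀ (norm_nonneg _) h1 2) h2
  simpa [Complex.sq_norm] using h3

lemma hstep {n m : Type*} [Fintype n] [Fintype m] (C : Matrix m n ℂ) (x : n → ℂ) (y : m → ℂ) :
    star (C *ᵥ x) ⬝ᵥ y = star x ⬝ᵥ (Cᴴ *ᵥ y) := by
  rw [Matrix.star_mulVec, ← Matrix.dotProduct_mulVec]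

open scoped MatrixOrder in
lemma posSemidef_iff_eq_transpose_mul_self {n : Type*} [Fintype n] [DecidableEq n]
    {A : Matrix n n ℂ} : A.PosSemidef ↔ ∃ B : Matrix n n ℂ, A = Bᴴ * B := by
  constructor
  · intro hA
    obtain ⟨B, rfl⟩ := CStarAlgebra.nonneg_iff_eq_star_mul_self.mp hA.nonneg
    exact ⟨B, rfl⟩
  · rintro ⟨B, rfl⟩
    exact posSemidef_conjTranspose_mul_self B

lemma key_CS {n : Type*} [Fintype n] [DecidableEq n] {A B : Matrix n n ℂ}
    (hA : A.PosSemidef) (hB : B.PosSemidef) (g : n → ℂ) :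
    (star (A *ᵥ g) ⬝ᵥ (B *ᵥ (A *ᵥ g))).re ≤
      (star g ⬝ᵥ (A *ᵥ g)).re * (A * B).trace.re := by
  obtain ⟨S, rfl⟩ := posSemidef_iff_eq_transpose_mul_self.mp hA
  obtain ⟨T, rfl⟩ := posSemidef_iff_eq_transpose_mul_self.mp hB
  have e1 : star ((Sᴴ * S) *ᵥ g) ⬝ᵥ ((Tᴴ * T) *ᵥ ((Sᴴ * S) *ᵥ g)) =
      star ((T * Sᴴ) *ᵥ (S *ᵥ g)) ⬝ᵥ ((T * Sᴴ) *ᵥ (S *ᵥ g)) := by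
    simp only [Matrix.mulVec_mulVec]
    rw [hstep, hstep]
    simp only [Matrix.mulVec_mulVec]
    congr 1
    simp [conjTranspose_mul, Matrix.mul_assoc]
  have e2 : star g ⬝ᵥ ((Sᴴ * S) *ᵥ g) = star (S *ᵥ g) ⬝ᵥ (S *ᵥ g) := by
    rw [hstep, Matrix.mulVec_mulVec]
  have e3 : ((Sᴴ * S) * (Tᴴ * T)).trace = ((T * Sᴴ)ᴴ * (T * Sᴴ)).trace := by
    rw [show (Sᴴ * S) * (Tᴴ * T) = Sᴴ * (S * Tᴴ * T) by noncomm_ring,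
      Matrix.trace_mul_comm]
    congr 1
    simp [conjTranspose_mul, Matrix.mul_assoc]
  rw [e1, e2, e3, dot_self_re, dot_self_re, trace_herm_sq_re, mul_comm]
  exact mulVec_norm_le _ _

lemma trace_mul_psd_re_nonneg {n : Type*} [Fintype n] [DecidableEq n]
    {A B : Matrix n n ℂ} (hA : A.PosSemidef) (hB : B.PosSemidef) :
    0 ≤ (A * B).trace.re := by
  obtain ⟨S, rfl⟩ := posSemidef_iff_eq_transpose_mul_self.mp hA
  obtain ⟨T, rfl⟩ := posSemidef_iff_eq_transpose_mul_self.mp hB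
  have e3 : ((Sᴴ * S) * (Tᴴ * T)).trace = ((T * Sᴴ)ᴴ * (T * Sᴴ)).trace := by
    rw [show (Sᴴ * S) * (Tᴴ * T) = Sᴴ * (S * Tᴴ * T) by noncomm_ring,
      Matrix.trace_mul_comm]
    congr 1
    simp [conjTranspose_mul, Matrix.mul_assoc]
  rw [e3, trace_herm_sq_re]
  exact Finset.sum_nonneg fun j _ => Finset.sum_nonneg fun i _ => Complex.normSq_nonneg _

/-- **Theorem 2: feasible points of the convex relaxation map to zero-forcing
beamformers without losing weighted sum rate.** Given matrices `U_k` with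
orthonormal columns spanning the orthogonal complement of `span{h_j : j ≠ k}`,
any Hermitian PSD matrices `Ã_k` satisfying the linear constraints
`∑ k, tr(Ã_k U_kᴴ Φ_ℓ U_k) ≤ γ_ℓ` can be mapped to zero-forcing steering
vectors `t̃_k` that satisfy the same linear constraints and do not decrease
the weighted sum rate objective. -/
theorem convex_relaxation_to_zero_forcing_beamformers
    (M K L : ℕ) (hKM : K ≤ M) (hL : 0 < L)
    (h : Fin K → (Fin M → ℂ))
    (hrank : (Matrix.of fun i (j : Fin K) => h j i : Matrix (Fin M) (Fin K) ℂ).rank = K)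
    (U : Fin K → Matrix (Fin M) (Fin (M - K + 1)) ℂ)
    (hUorth : ∀ k, (U k)ᴴ * U k = 1)
    (hUspan : ∀ k, (↑(Submodule.span ℂ
        (Set.range (fun j : Fin (M - K + 1) => fun i => U k i j))) : Set (Fin M → ℂ)) =
      {v | ∀ j : Fin K, j ≠ k → star (h j) ⬝ᵥ v = 0})
    (Φ : Fin L → Matrix (Fin M) (Fin M) ℂ) (hΦ : ∀ ℓ, (Φ ℓ).PosSemidef)
    (hΦ1 : Φ ⟨0, hL⟩ = 1)
    (γ : Fin L → ℝ) (hγ : ∀ ℓ, 0 < γ ℓ)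
    (W : Fin K → ℝ) (hW : ∀ k, 0 ≤ W k)
    (Atil : Fin K → Matrix (Fin (M - K + 1)) (Fin (M - K + 1)) ℂ)
    (hAtil : ∀ k, (Atil k).PosSemidef)
    (hAfeas : ∀ ℓ, ∑ k, ((Atil k) * ((U k)ᴴ * Φ ℓ * U k)).trace.re ≤ γ ℓ) :
    ∃ t : Fin K → (Fin M → ℂ),
      (∀ j k : Fin K, j ≠ k → star (h j) ⬝ᵥ t k = 0) ∧
      (∀ ℓ, ∑ k, (star (t k) ⬝ᵥ ((Φ ℓ) *ᵥ t k)).re ≤ γ ℓ) ∧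
      (∑ k, W k * Real.log (1 + Complex.normSq (star (h k) ⬝ᵥ t k)) ≥
        ∑ k, W k * Real.log
          (1 + (star (h k) ⬝ᵥ ((U k * Atil k * (U k)ᴴ) *ᵥ h k)).re)) := by
  classical
  set g : ∀ _ : Fin K, Fin (M - K + 1) → ℂ := fun k => (U k)ᴴ *ᵥ h k with hg
  set a : ∀ _ : Fin K, Fin (M - K + 1) → ℂ := fun k => Atil k *ᵥ g k with ha
  set cC : Fin K → ℂ := fun k => star (g k) ⬝ᵥ (Atil k *ᵥ g k) with hcC
  have hcnn : ∀ k, 0 ≤ (cC k).re ∧ (cC k).im = 0 := fun k => by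
    obtain ⟨h1, h2⟩ := Complex.nonneg_iff.mp ((hAtil k).dotProduct_mulVec_nonneg (g k))
    exact ⟨h1, h2.symm⟩
  set c : Fin K → ℝ := fun k => (cC k).re with hc
  have hcC_real : ∀ k, cC k = (c k : ℂ) := fun k =>
    Complex.ext (by simp [hc]) (by simp [hc, (hcnn k).2])
  have hdotUa : ∀ k, star (h k) ⬝ᵥ (U k *ᵥ a k) = cC k := by
    intro k
    have e := hstep ((U k)ᴴ) (h k) (a k)
    simp only [conjTranspose_conjTranspose] at e
    rw [← e]
  have hRHS : ∀ k, star (h k) ⬝ᵥ ((U k * Atil k * (U k)ᴴ) *ᵥ h k) = cC k := by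
    intro k
    have e : star (g k) ⬝ᵥ (Atil k *ᵥ g k) =
        star (h k) ⬝ᵥ ((U k * Atil k * (U k)ᴴ) *ᵥ h k) := by
      rw [hg]
      simp only [Matrix.mulVec_mulVec]
      rw [hstep]
      simp only [Matrix.mulVec_mulVec, conjTranspose_conjTranspose, Matrix.mul_assoc]
    rw [← e, hcC]
  refine ⟨fun k => if c k = 0 then 0 else
      ((Real.sqrt (c k) : ℂ))⁻¹ • (U k *ᵥ a k), ?_, ?_, ?_⟩
  · -- zero-forcing
    intro j k hjk
    have hmem : (if c k = 0 then 0 else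
        ((Real.sqrt (c k) : ℂ))⁻¹ • (U k *ᵥ a k)) ∈
        Submodule.span ℂ (Set.range (fun j : Fin (M - K + 1) => fun i => U k i j)) := by
      split_ifs with hck
      · exact Submodule.zero_mem _
      · refine Submodule.smul_mem _ _ ?_
        have hUa : U k *ᵥ a k = ∑ j : Fin (M - K + 1), a k j • (fun i => U k i j) := by
          ext i
          simp [Matrix.mulVec, dotProduct, mul_comm]
        rw [hUa]
        exact Submodule.sum_mem _ fun j _ =>
          Submodule.smul_mem _ _ (Submodule.subset_span ⟨j, rfl⟩)
    have hmem2 : (if c k = 0 then 0 else ((Real.sqrt (c k) : ℂ))⁻¹ • (U k *ᵥ a k)) ∈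
        {v : Fin M → ℂ | ∀ j : Fin K, j ≠ k → star (h j) ⬝ᵥ v = 0} := by
      rw [← hUspan k]; exact hmem
    exact hmem2 j hjk
  · -- power constraints
    intro ℓ
    refine le_trans (Finset.sum_le_sum fun k _ => ?_) (hAfeas ℓ)
    have hBpsd : ((U k)ᴴ * Φ ℓ * U k).PosSemidef :=
      (hΦ ℓ).conjTranspose_mul_mul_same (U k)
    by_cases hck : c k = 0
    · simp only [hck, if_pos rfl]
      simpa using trace_mul_psd_re_nonneg (hAtil k) hBpsd
    · have hcpos : 0 < c k := lt_of_le_of_ne (hcnn k).1 (Ne.symm hck)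
      simp only [if_neg hck]
      have hw : star (U k *ᵥ a k) ⬝ᵥ (Φ ℓ *ᵥ (U k *ᵥ a k)) =
          star (a k) ⬝ᵥ (((U k)ᴴ * Φ ℓ * U k) *ᵥ a k) := by
        rw [hstep]
        simp only [Matrix.mulVec_mulVec, Matrix.mul_assoc]
      have hz : star ((Real.sqrt (c k) : ℂ))⁻¹ * ((Real.sqrt (c k) : ℂ))⁻¹ =
          (((c k)⁻¹ : ℝ) : ℂ) := by
        rw [← Complex.ofReal_inv, Complex.star_def, Complex.conj_ofReal,
          ← Complex.ofReal_mul, ← mul_inv, Real.mul_self_sqrt hcpos.le,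
          Complex.ofReal_inv]
      have hdot : star (((Real.sqrt (c k) : ℂ))⁻¹ • (U k *ᵥ a k)) ⬝ᵥ
          (Φ ℓ *ᵥ (((Real.sqrt (c k) : ℂ))⁻¹ • (U k *ᵥ a k))) =
          (((c k)⁻¹ : ℝ) : ℂ) * (star (a k) ⬝ᵥ (((U k)ᴴ * Φ ℓ * U k) *ᵥ a k)) := by
        rw [star_smul, Matrix.mulVec_smul, smul_dotProduct, dotProduct_smul,
          smul_smul, hw, smul_eq_mul, hz]
      rw [hdot, Complex.re_ofReal_mul]
      have hkey := key_CS (hAtil k) hBpsd (g k)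
      calc (c k)⁻¹ * (star (a k) ⬝ᵥ (((U k)ᴴ * Φ ℓ * U k) *ᵥ a k)).re
          ≤ (c k)⁻¹ * (c k * (Atil k * ((U k)ᴴ * Φ ℓ * U k)).trace.re) := by
            refine mul_le_mul_of_nonneg_left ?_ (inv_nonneg.mpr hcpos.le)
            simpa [ha, hcC, hc] using hkey
        _ = (Atil k * ((U k)ᴴ * Φ ℓ * U k)).trace.re := by
            field_simp
  · -- objective
    refine ge_of_eq (Finset.sum_congr rfl fun k _ => ?_)
    congr 2
    rw [hRHS k, hcC_real k, Complex.ofReal_re]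
    by_cases hck : c k = 0
    · simp [hck]
    · have hcpos : 0 < c k := lt_of_le_of_ne (hcnn k).1 (Ne.symm hck)
      simp only [if_neg hck]
      rw [dotProduct_smul, smul_eq_mul, hdotUa k, hcC_real k, ← Complex.ofReal_inv,
        ← Complex.ofReal_mul, Complex.normSq_ofReal]
      have hs : Real.sqrt (c k) * Real.sqrt (c k) = c k := Real.mul_self_sqrt hcpos.le
      have hsne : Real.sqrt (c k) ≠ 0 := by positivity
      field_simp
      rw [Real.sq_sqrt hcpos.le]
      ring
end
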